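/- Let B_r = {ξ ∈ ℂ : |ξ| < r} and let f be analytic on the universal covering of B_r \ {0}. If for every circle C centered at 0 and contained in B_r \ {0}, and for every function g analytic in B_r, the integral ∮_C f(ξ) g(ξ) dξ = 0, then f is single-valued and extends to a function analytic on all of B_r. -/

import Mathlib

open Metric Real

section Aux

open Complex intervalIntegral Set Filter in
theorem aux_vert (r : ℝ) (hr : 0 < r) (F : ℂ → ℂ)
    (hint : ∀ ρ : ℝ, 0 < ρ → ρ < r → ∀ g : ℂ → ℂ, AnalyticOnNhd ℂ g (Metric.ball 0 r) →
      (∫ θ in (0:ℝ)..(2 * Real.pi),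
          F ((Real.log ρ : ℂ) + (θ : ℂ) * Complex.I) *
            g ((ρ : ℂ) * Complex.exp ((θ : ℂ) * Complex.I)) *
            ((ρ : ℂ) * Complex.exp ((θ : ℂ) * Complex.I) * Complex.I)) = 0)
    (a : ℝ) (ha : Real.exp a < r) :
    (∫ θ in (0:ℝ)..(2 * Real.pi),
        F ((a : ℂ) + (θ : ℂ) * Complex.I) * Complex.exp ((a : ℂ) + (θ : ℂ) * Complex.I)) = 0 := by
  have h1 := hint (Real.exp a) (Real.exp_pos a) ha 1 (fun z _ => analyticAt_const)
  rw [Real.log_exp] at h1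
  have h2 : (∫ θ in (0:ℝ)..(2 * Real.pi),
      F ((a : ℂ) + (θ : ℂ) * Complex.I) * Complex.exp ((a : ℂ) + (θ : ℂ) * Complex.I)) * Complex.I
      = 0 := by
    rw [← intervalIntegral.integral_mul_const]
    rw [← h1]
    apply intervalIntegral.integral_congr
    intro θ _
    have : ((Real.exp a : ℝ) : ℂ) * Complex.exp ((θ:ℂ) * Complex.I)
        = Complex.exp ((a:ℂ) + (θ:ℂ) * Complex.I) := by
      rw [Complex.exp_add, Complex.ofReal_exp]
    simp only [Pi.one_apply, mul_one, this]
    ring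
  have := mul_eq_zero.1 h2
  simpa [Complex.I_ne_zero] using this

open Complex intervalIntegral Set Filter in
theorem aux_horiz (r : ℝ) (hr : 0 < r) (F : ℂ → ℂ)
    (hF : AnalyticOnNhd ℂ F {z : ℂ | Real.exp z.re < r})
    (hv : ∀ a : ℝ, Real.exp a < r →
      (∫ θ in (0:ℝ)..(2 * Real.pi),
        F ((a : ℂ) + (θ : ℂ) * Complex.I) * Complex.exp ((a : ℂ) + (θ : ℂ) * Complex.I)) = 0)
    (a b : ℝ) (ha : Real.exp a < r) (hb : Real.exp b < r) :
    (∫ x in a..b, (F (x:ℂ) - F ((x:ℂ) + 2 * Real.pi * Complex.I)) * Complex.exp (x:ℂ)) = 0 := by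
  set f : ℂ → ℂ := fun ζ => F ζ * Complex.exp ζ with hf_def
  set z : ℂ := (a : ℂ) with hz
  set w : ℂ := (b : ℂ) + (2 * Real.pi : ℝ) * Complex.I with hw
  have hzre : z.re = a := by simp [hz]
  have hzim : z.im = 0 := by simp [hz]
  have hwre : w.re = b := by simp [hw]
  have hwim : w.im = 2 * Real.pi := by simp [hw]
  have hex : ∀ x ∈ Set.uIcc a b, Real.exp x < r := by
    intro x hx
    rcases le_max_iff.1 hx.2 with h | h
    · exact lt_of_le_of_lt (Real.exp_le_exp.2 h) ha
    · exact lt_of_le_of_lt (Real.exp_le_exp.2 h) hb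
  have hrect : DifferentiableOn ℂ f (Set.uIcc z.re w.re ×ℂ Set.uIcc z.im w.im) := by
    intro ζ hζ
    have hζre : ζ.re ∈ Set.uIcc a b := by
      rw [hzre, hwre] at hζ; exact hζ.1
    have hmem : Real.exp ζ.re < r := hex _ hζre
    exact (((hF ζ hmem).differentiableAt).mul (Complex.differentiable_exp ζ)).differentiableWithinAt
  have key := Complex.integral_boundary_rect_eq_zero_of_differentiableOn f z w hrect
  rw [hzre, hwre, hzim, hwim] at key
  have hv1 : (∫ y in (0:ℝ)..(2 * Real.pi), f ((b:ℝ) + (y:ℂ) * Complex.I)) = 0 := by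
    simpa [hf_def] using hv b hb
  have hv2 : (∫ y in (0:ℝ)..(2 * Real.pi), f ((a:ℝ) + (y:ℂ) * Complex.I)) = 0 := by
    simpa [hf_def] using hv a ha
  rw [hv1, hv2] at key
  simp only [smul_zero, add_zero, sub_zero] at key
  have h1 : (∫ x in a..b, f ((x:ℂ) + ((0:ℝ):ℂ) * Complex.I)) = ∫ x in a..b, F (x:ℂ) * Complex.exp (x:ℂ) := by
    apply intervalIntegral.integral_congr; intro x _; simp [hf_def]
  have h2 : (∫ x in a..b, f ((x:ℂ) + ((2 * Real.pi : ℝ):ℂ) * Complex.I))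
      = ∫ x in a..b, F ((x:ℂ) + 2 * Real.pi * Complex.I) * Complex.exp (x:ℂ) := by
    apply intervalIntegral.integral_congr; intro x _
    have harg : ((x:ℂ) + ((2 * Real.pi : ℝ):ℂ) * Complex.I) = (x:ℂ) + 2 * Real.pi * Complex.I := by
      push_cast; ring
    have he : Complex.exp ((x:ℂ) + 2 * (Real.pi:ℂ) * Complex.I) = Complex.exp (x:ℂ) := by
      rw [Complex.exp_add, Complex.exp_two_pi_mul_I, mul_one]
    simp only [hf_def, harg]
    rw [he]
  rw [h1, h2] at key
  have int1 : IntervalIntegrable (fun x : ℝ => F (x:ℂ) * Complex.exp (x:ℂ)) MeasureTheory.volume a b := by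
    apply ContinuousOn.intervalIntegrable
    intro x hx
    have hc : ContinuousAt (fun x : ℝ => F (x:ℂ) * Complex.exp (x:ℂ)) x := by
      have h1 : ContinuousAt F (x:ℂ) := (hF _ (by simpa using hex x hx)).continuousAt
      exact ((h1.comp Complex.continuous_ofReal.continuousAt).mul
        ((Complex.continuous_exp.comp Complex.continuous_ofReal).continuousAt))
    exact hc.continuousWithinAt
  have int2 : IntervalIntegrable (fun x : ℝ => F ((x:ℂ) + 2 * Real.pi * Complex.I) * Complex.exp (x:ℂ))
      MeasureTheory.volume a b := by
    apply ContinuousOn.intervalIntegrable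
    intro x hx
    have hre : ((x:ℂ) + 2 * Real.pi * Complex.I).re = x := by simp
    have h1 : ContinuousAt F ((x:ℂ) + 2 * Real.pi * Complex.I) :=
      (hF _ (by rw [Set.mem_setOf_eq, hre]; exact hex x hx)).continuousAt
    have h2 : ContinuousAt (fun x : ℝ => (x:ℂ) + 2 * Real.pi * Complex.I) x :=
      (Complex.continuous_ofReal.continuousAt).add continuousAt_const
    have h3 : ContinuousAt (fun x : ℝ => F ((x:ℂ) + 2 * Real.pi * Complex.I)) x :=
      ContinuousAt.comp (f := fun x : ℝ => (x:ℂ) + 2 * Real.pi * Complex.I) h1 h2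
    exact (h3.mul
      ((Complex.continuous_exp.comp Complex.continuous_ofReal).continuousAt)).continuousWithinAt
  rw [← intervalIntegral.integral_sub int1 int2] at key
  rw [← key]
  apply intervalIntegral.integral_congr; intro x _; ring

open Complex intervalIntegral Set Filter in
theorem aux_per (r : ℝ) (hr : 0 < r) (F : ℂ → ℂ)
    (hF : AnalyticOnNhd ℂ F {z : ℂ | Real.exp z.re < r})
    (hh : ∀ a b : ℝ, Real.exp a < r → Real.exp b < r →
      (∫ x in a..b, (F (x:ℂ) - F ((x:ℂ) + 2 * Real.pi * Complex.I)) * Complex.exp (x:ℂ)) = 0) :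
    ∀ z : ℂ, Real.exp z.re < r → F (z + 2 * Real.pi * Complex.I) = F z := by
  set D : Set ℂ := {z : ℂ | Real.exp z.re < r} with hD
  have hDopen : IsOpen D := by
    have : Continuous fun z : ℂ => Real.exp z.re := Real.continuous_exp.comp Complex.continuous_re
    exact isOpen_lt this continuous_const
  -- the function φ and its vanishing
  set φ : ℝ → ℂ := fun x => (F (x:ℂ) - F ((x:ℂ) + 2 * Real.pi * Complex.I)) * Complex.exp (x:ℂ)
    with hφ
  have hφcont : ∀ s : ℝ, Real.exp s < r → ContinuousAt φ s := by
    intro s hs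
    have h1 : ContinuousAt (fun x : ℝ => F (x:ℂ)) s :=
      (hF _ (by show Real.exp ((s:ℂ)).re < r; simpa using hs)).continuousAt.comp Complex.continuous_ofReal.continuousAt
    have h2 : ContinuousAt (fun x : ℝ => F ((x:ℂ) + 2 * Real.pi * Complex.I)) s := by
      have hre : ((s:ℂ) + 2 * Real.pi * Complex.I).re = s := by simp
      exact ContinuousAt.comp (f := fun x : ℝ => (x:ℂ) + 2 * Real.pi * Complex.I)
        ((hF _ (by rw [Set.mem_setOf_eq, hre]; exact hs)).continuousAt)
        ((Complex.continuous_ofReal.continuousAt).add continuousAt_const)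
    exact (h1.sub h2).mul ((Complex.continuous_exp.comp Complex.continuous_ofReal).continuousAt)
  have hφ0 : ∀ s : ℝ, Real.exp s < r → φ s = 0 := by
    intro s hs
    have has : Real.exp (s - 1) < r :=
      lt_trans (Real.exp_lt_exp.2 (by linarith)) hs
    set ψ : ℝ → ℂ := fun b => ∫ x in (s-1)..b, φ x with hψ
    have hU : IsOpen {b : ℝ | Real.exp b < r} :=
      isOpen_lt Real.continuous_exp continuous_const
    have hψ0 : ∀ b, Real.exp b < r → ψ b = 0 := fun b hb => hh (s-1) b has hb
    have hd0 : HasDerivAt ψ 0 s := by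
      have : ψ =ᶠ[nhds s] (fun _ => (0:ℂ)) := by
        filter_upwards [hU.mem_nhds hs] with b hb using hψ0 b hb
      exact (hasDerivAt_const s (0:ℂ)).congr_of_eventuallyEq this
    have hintble : IntervalIntegrable φ MeasureTheory.volume (s-1) s := by
      apply ContinuousOn.intervalIntegrable
      intro x hx
      have : Real.exp x < r := by
        rcases le_max_iff.1 hx.2 with h | h
        · exact lt_of_le_of_lt (Real.exp_le_exp.2 (h.trans (by linarith))) hs
        · exact lt_of_le_of_lt (Real.exp_le_exp.2 h) hs
      exact (hφcont x this).continuousWithinAt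
    have hmeas : StronglyMeasurableAtFilter φ (nhds s) := by
      refine ContinuousOn.stronglyMeasurableAtFilter hU ?_ s hs
      exact fun x hx => (hφcont x hx).continuousWithinAt
    have hd1 : HasDerivAt ψ (φ s) s :=
      intervalIntegral.integral_hasDerivAt_right hintble hmeas (hφcont s hs)
    exact (hd1.unique hd0)
  -- identity theorem
  set G : ℂ → ℂ := fun z => F (z + 2 * Real.pi * Complex.I) - F z with hG
  have hGan : AnalyticOnNhd ℂ G D := by
    intro z hz
    have hre : (z + 2 * Real.pi * Complex.I).re = z.re := by simp
    have h1 : AnalyticAt ℂ (fun z : ℂ => F (z + 2 * Real.pi * Complex.I)) z := by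
      refine AnalyticAt.comp (f := fun z : ℂ => z + 2 * Real.pi * Complex.I) ?_ ?_
      · exact hF _ (by rw [Set.mem_setOf_eq, hre]; exact hz)
      · exact analyticAt_id.add analyticAt_const
    exact h1.sub (hF z hz)
  have hpre : IsPreconnected D := by
    have : D = {z : ℂ | z.re < Real.log r} := by
      ext z
      simp only [Set.mem_setOf_eq, hD]
      rw [Real.lt_log_iff_exp_lt hr]
    rw [this]
    exact (convex_halfSpace_re_lt (Real.log r)).isPreconnected
  set z₀ : ℂ := ((Real.log r - 1 : ℝ) : ℂ) with hz₀
  have hz₀D : z₀ ∈ D := by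
    simp only [hD, Set.mem_setOf_eq, hz₀, Complex.ofReal_re]
    have h := Real.exp_lt_exp.2 (show Real.log r - 1 < Real.log r by linarith)
    simpa [Real.exp_log hr] using h
  have hfreq : ∃ᶠ z in nhdsWithin z₀ {z₀}ᶜ, G z = 0 := by
    set x : ℕ → ℂ := fun n => ((Real.log r - 1 - ((n:ℝ)+1)⁻¹ : ℝ) : ℂ) with hx
    have hxlt : ∀ n : ℕ, Real.exp (Real.log r - 1 - ((n:ℝ)+1)⁻¹) < r := by
      intro n
      have h2 : (0:ℝ) < ((n:ℝ)+1)⁻¹ := by positivity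
      have h := Real.exp_lt_exp.2 (show Real.log r - 1 - ((n:ℝ)+1)⁻¹ < Real.log r by linarith)
      simpa [Real.exp_log hr] using h
    have hG0 : ∀ n : ℕ, G (x n) = 0 := by
      intro n
      have := hφ0 _ (hxlt n)
      rw [hφ] at this
      have hexp : Complex.exp (((Real.log r - 1 - ((n:ℝ)+1)⁻¹ : ℝ)):ℂ) ≠ 0 := Complex.exp_ne_zero _
      have := (mul_eq_zero.1 this).resolve_right hexp
      simp only [hG, hx, sub_eq_zero] at this ⊢
      exact this.symm
    have htend : Tendsto x atTop (nhdsWithin z₀ {z₀}ᶜ) := by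
      apply tendsto_nhdsWithin_of_tendsto_nhds_of_eventually_within
      · rw [hz₀]
        apply Tendsto.comp (Complex.continuous_ofReal.tendsto _)
        have : Tendsto (fun n : ℕ => ((n:ℝ)+1)⁻¹) atTop (nhds 0) :=
          tendsto_one_div_add_atTop_nhds_zero_nat.congr (by intro n; rw [one_div])
        have := (tendsto_const_nhds (x := (Real.log r - 1 : ℝ)) (f := atTop)).sub this
        simpa using this
      · apply Filter.Eventually.of_forall
        intro n
        simp only [hx, hz₀, Set.mem_compl_iff, Set.mem_singleton_iff]
        intro h
        have := Complex.ofReal_inj.1 h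
        have h2 : (0:ℝ) < ((n:ℝ)+1)⁻¹ := by positivity
        linarith
    exact htend.frequently (Filter.Frequently.of_forall hG0)
  have := hGan.eqOn_zero_of_preconnected_of_frequently_eq_zero hpre hz₀D hfreq
  intro z hz
  have hGz := this hz
  simpa [hG, sub_eq_zero] using hGz

open Complex intervalIntegral Set Filter in
theorem aux_B (r : ℝ) (hr : 0 < r) (F : ℂ → ℂ)
    (hper : ∀ z : ℂ, Real.exp z.re < r → F (z + 2 * Real.pi * Complex.I) = F z) :
    ∀ a b : ℂ, Real.exp a.re < r → Complex.exp a = Complex.exp b → F a = F b := by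
  have hre : ∀ (z : ℂ) (n : ℤ), (z + (n:ℂ) * (2 * Real.pi * Complex.I)).re = z.re := by
    intro z n; simp
  have hper' : ∀ n : ℤ, ∀ z : ℂ, Real.exp z.re < r →
      F (z + (n:ℂ) * (2 * Real.pi * Complex.I)) = F z := by
    intro n
    induction n using Int.induction_on with
    | zero => intro z hz; simp
    | succ k ih =>
      intro z hz
      have h1 : z + ((k:ℤ)+1:ℤ) * (2 * Real.pi * Complex.I)
          = (z + (k:ℂ) * (2 * Real.pi * Complex.I)) + 2 * Real.pi * Complex.I := by
        push_cast; ring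
      rw [h1, hper _ (by simpa using hz)]
      exact ih z hz
    | pred k ih =>
      intro z hz
      have h1 : z + (-(k:ℤ)-1:ℤ) * (2 * Real.pi * Complex.I)
          = (z + (-(k:ℤ):ℤ) * (2 * Real.pi * Complex.I)) - 2 * Real.pi * Complex.I := by
        push_cast; ring
      have h2 := hper ((z + (-(k:ℤ):ℤ) * (2 * Real.pi * Complex.I)) - 2 * Real.pi * Complex.I)
        (by simpa using hz)
      rw [sub_add_cancel] at h2
      rw [h1, ← h2]
      exact ih z hz
  intro a b hA hE
  obtain ⟨n, hn⟩ := Complex.exp_eq_exp_iff_exists_int.1 hE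
  have hbre : b.re = a.re := by
    rw [hn]; exact (hre b n).symm
  have : F (b + (n:ℂ) * (2 * Real.pi * Complex.I)) = F b :=
    hper' n b (by rw [hbre]; exact hA)
  rw [← hn] at this
  exact this

open Complex intervalIntegral Set Filter in
theorem aux_fan (r : ℝ) (hr : 0 < r) (F : ℂ → ℂ)
    (hF : AnalyticOnNhd ℂ F {z : ℂ | Real.exp z.re < r})
    (hB : ∀ a b : ℂ, Real.exp a.re < r → Complex.exp a = Complex.exp b → F a = F b) :
    ∀ w : ℂ, w ≠ 0 → ‖w‖ < r → AnalyticAt ℂ (fun w => F (Complex.log w)) w := by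
  intro w₀ hne habs
  have hlogmem : ∀ w : ℂ, w ≠ 0 → ‖w‖ < r → Real.exp (Complex.log w).re < r := by
    intro w hw h
    rw [Complex.log_re, Real.exp_log (norm_pos_iff.mpr hw)]
    exact h
  by_cases hslit : w₀ ∈ Complex.slitPlane
  · exact (hF _ (hlogmem w₀ hne habs)).comp (analyticAt_clog hslit)
  · -- w₀ is a negative real
    have hslit' : -w₀ ∈ Complex.slitPlane := by
      rw [Complex.mem_slitPlane_iff] at hslit ⊢
      push_neg at hslit
      rcases hslit with ⟨h1, h2⟩
      simp only [Complex.neg_re, Complex.neg_im, neg_ne_zero]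
      left
      rcases lt_or_eq_of_le h1 with h | h
      · linarith
      · exfalso; exact hne (Complex.ext h (by simpa using h2))
    set g : ℂ → ℂ := fun w => F (Complex.log (-w) + Real.pi * Complex.I) with hg
    have hgan : AnalyticAt ℂ g w₀ := by
      have hinner : AnalyticAt ℂ (fun w : ℂ => Complex.log (-w) + Real.pi * Complex.I) w₀ := by
        have h1 : AnalyticAt ℂ (fun w : ℂ => Complex.log (-w)) w₀ :=
          AnalyticAt.comp (f := fun w : ℂ => -w) (analyticAt_clog hslit') analyticAt_id.neg
        exact h1.add analyticAt_const
      refine AnalyticAt.comp (f := fun w : ℂ => Complex.log (-w) + Real.pi * Complex.I) ?_ hinner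
      apply hF
      have : (Complex.log (-w₀) + Real.pi * Complex.I).re = Real.log (‖w₀‖) := by
        simp [Complex.log_re]
      rw [Set.mem_setOf_eq, this, Real.exp_log (norm_pos_iff.mpr hne)]
      exact habs
    have heq : (fun w => F (Complex.log w)) =ᶠ[nhds w₀] g := by
      have hmem : {w : ℂ | w ≠ 0} ∩ Metric.ball 0 r ∈ nhds w₀ := by
        apply Filter.inter_mem
        · exact (isOpen_ne (x := (0:ℂ))).mem_nhds hne
        · exact (Metric.isOpen_ball).mem_nhds (by simpa [Complex.dist_eq] using habs)
      filter_upwards [hmem] with w hw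
      rcases hw with ⟨hw0, hwball⟩
      have hwabs : ‖w‖ < r := by simpa [Complex.dist_eq] using hwball
      apply hB
      · exact hlogmem w hw0 hwabs
      · rw [Complex.exp_log hw0, Complex.exp_add, Complex.exp_log (neg_ne_zero.2 hw0),
          Complex.exp_pi_mul_I]
        ring
    exact hgan.congr heq.symm

open Complex intervalIntegral Set Filter in
theorem aux_circ (r : ℝ) (hr : 0 < r) (F : ℂ → ℂ)
    (hB : ∀ a b : ℂ, Real.exp a.re < r → Complex.exp a = Complex.exp b → F a = F b)
    (hint : ∀ ρ : ℝ, 0 < ρ → ρ < r → ∀ g : ℂ → ℂ, AnalyticOnNhd ℂ g (Metric.ball 0 r) →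
      (∫ θ in (0:ℝ)..(2 * Real.pi),
          F ((Real.log ρ : ℂ) + (θ : ℂ) * Complex.I) *
            g ((ρ : ℂ) * Complex.exp ((θ : ℂ) * Complex.I)) *
            ((ρ : ℂ) * Complex.exp ((θ : ℂ) * Complex.I) * Complex.I)) = 0) :
    ∀ ρ : ℝ, 0 < ρ → ρ < r → ∀ g : ℂ → ℂ, AnalyticOnNhd ℂ g (Metric.ball 0 r) →
      (∮ z in C(0, ρ), F (Complex.log z) * g z) = 0 := by
  intro ρ hρ hρr g hg
  refine Eq.trans ?_ (hint ρ hρ hρr g hg)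
  rw [circleIntegral]
  apply intervalIntegral.integral_congr
  intro θ _
  have hcm : circleMap 0 ρ θ = (ρ:ℂ) * Complex.exp ((θ:ℂ) * Complex.I) := by
    simp [circleMap]
  have hne : circleMap 0 ρ θ ≠ 0 := circleMap_ne_center hρ.ne'
  have hFeq : F (Complex.log (circleMap 0 ρ θ)) = F ((Real.log ρ : ℂ) + (θ:ℂ) * Complex.I) := by
    apply hB
    · rw [Complex.log_re, Real.exp_log (norm_pos_iff.mpr hne)]
      have : ‖circleMap 0 ρ θ‖ = ρ := by
        simp [hcm, abs_of_pos hρ]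
      rw [this]; exact hρr
    · rw [Complex.exp_log hne, Complex.exp_add, hcm]
      congr 1
      rw [← Complex.ofReal_exp, Real.exp_log hρ]
  simp only [deriv_circleMap, smul_eq_mul]
  rw [hFeq, hcm]
  ring

open Complex intervalIntegral Set Filter in
theorem aux_inner (ρ : ℝ) (hρ : 0 < ρ) (f : ℂ → ℂ) (w : ℂ)
    (hw : ρ < ‖w‖)
    (hfc : ContinuousOn f (Metric.sphere (0:ℂ) ρ))
    (hmon : ∀ n : ℕ, (∮ z in C(0, ρ), f z * z ^ n) = 0) :
    (∮ z in C(0, ρ), f z * (z - w)⁻¹) = 0 := by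
  have hw0 : w ≠ 0 := by
    intro h; rw [h] at hw; simp at hw; linarith
  have habsw : 0 < ‖w‖ := lt_trans hρ hw
  have hzw : ∀ z ∈ Metric.sphere (0:ℂ) ρ, z - w ≠ 0 := by
    intro z hz h
    rw [sub_eq_zero] at h
    rw [mem_sphere_iff_norm, sub_zero, h] at hz
    linarith
  have hcont : ∀ N : ℕ, ContinuousOn (fun z => f z * ((z / w) ^ N * (z - w)⁻¹))
      (Metric.sphere (0:ℂ) ρ) := by
    intro N
    apply hfc.mul
    apply ContinuousOn.mul
    · exact (continuousOn_id.div_const w).pow N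
    · exact ContinuousOn.inv₀ (continuousOn_id.sub continuousOn_const) hzw
  have hci : ∀ N : ℕ, CircleIntegrable (fun z => f z * ((z / w) ^ N * (z - w)⁻¹)) 0 ρ :=
    fun N => (hcont N).circleIntegrable hρ.le
  set J : ℕ → ℂ := fun N => ∮ z in C(0, ρ), f z * ((z / w) ^ N * (z - w)⁻¹) with hJdef
  have hstep : ∀ N : ℕ, J N = J (N + 1) := by
    intro N
    have hsub : J (N+1) - J N = ∮ z in C(0, ρ),
        (f z * ((z / w) ^ (N+1) * (z - w)⁻¹) - f z * ((z / w) ^ N * (z - w)⁻¹)) :=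
      (circleIntegral.integral_sub (hci (N+1)) (hci N)).symm
    have heq : (∮ z in C(0, ρ),
        (f z * ((z / w) ^ (N+1) * (z - w)⁻¹) - f z * ((z / w) ^ N * (z - w)⁻¹)))
        = ∮ z in C(0, ρ), (f z * z ^ N) * ((w ^ (N+1))⁻¹) := by
      apply circleIntegral.integral_congr hρ.le
      intro z hz
      have h1 : z - w ≠ 0 := hzw z hz
      simp only [div_pow]
      field_simp
      ring
    have heq2 : (∮ z in C(0, ρ), (f z * z ^ N) * (w ^ (N+1))⁻¹) = 0 := by
      have := circleIntegral.integral_smul_const (fun z => f z * z ^ N) ((w ^ (N+1))⁻¹ : ℂ) 0 ρ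
      simp only [smul_eq_mul] at this
      rw [this, hmon N, zero_mul]
    rw [heq, heq2] at hsub
    exact (sub_eq_zero.1 hsub).symm
  have hJ0 : ∀ N, J 0 = J N := by
    intro N
    induction N with
    | zero => rfl
    | succ k ih => rw [ih]; exact hstep k
  -- bound
  obtain ⟨M, hM⟩ := (isCompact_sphere (0:ℂ) ρ).exists_bound_of_continuousOn hfc
  have hM0 : 0 ≤ M := by
    have : circleMap 0 ρ 0 ∈ Metric.sphere (0:ℂ) ρ := circleMap_mem_sphere _ hρ.le _
    exact le_trans (norm_nonneg _) (hM _ this)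
  set q : ℝ := ρ / ‖w‖ with hq
  have hq0 : 0 ≤ q := div_nonneg hρ.le habsw.le
  have hq1 : q < 1 := (div_lt_one habsw).2 hw
  have hd : 0 < ‖w‖ - ρ := by linarith
  have hbound : ∀ N : ℕ, ‖J 0‖ ≤ 2 * Real.pi * ρ * (M * (‖w‖ - ρ)⁻¹) * q ^ N := by
    intro N
    rw [hJ0 N]
    have := circleIntegral.norm_integral_le_of_norm_le_const (c := (0:ℂ))
      (f := fun z => f z * ((z / w) ^ N * (z - w)⁻¹))
      (C := M * (‖w‖ - ρ)⁻¹ * q ^ N) hρ.le ?_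
    · calc ‖J N‖ ≤ 2 * Real.pi * ρ * (M * (‖w‖ - ρ)⁻¹ * q ^ N) := this
        _ = 2 * Real.pi * ρ * (M * (‖w‖ - ρ)⁻¹) * q ^ N := by ring
    · intro z hz
      have habsz : ‖z‖ = ρ := by
        rw [mem_sphere_iff_norm, sub_zero] at hz; exact hz
      have h1 : ‖w‖ - ρ ≤ ‖z - w‖ := by
        have h := norm_sub_norm_le w z
        rw [norm_sub_rev] at h
        simpa [habsz] using h
      have h2 : ‖(z - w)⁻¹‖ ≤ (‖w‖ - ρ)⁻¹ := by
        rw [norm_inv]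
        exact inv_anti₀ hd h1
      have h3 : ‖(z / w) ^ N‖ = q ^ N := by
        rw [norm_pow, norm_div, habsz]
      rw [norm_mul, norm_mul, h3]
      calc ‖f z‖ * (q ^ N * ‖(z - w)⁻¹‖)
          ≤ M * (q ^ N * (‖w‖ - ρ)⁻¹) := by
            apply mul_le_mul (hM z hz)
            · exact mul_le_mul_of_nonneg_left h2 (pow_nonneg hq0 N)
            · positivity
            · exact hM0
        _ = M * (‖w‖ - ρ)⁻¹ * q ^ N := by ring
  have htend : Tendsto (fun N : ℕ => 2 * Real.pi * ρ * (M * (‖w‖ - ρ)⁻¹) * q ^ N)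
      atTop (nhds 0) := by
    have := tendsto_pow_atTop_nhds_zero_of_lt_one hq0 hq1
    have := this.const_mul (2 * Real.pi * ρ * (M * (‖w‖ - ρ)⁻¹))
    simpa using this
  have hJ0norm : ‖J 0‖ ≤ 0 := ge_of_tendsto' htend hbound
  have hJ00 : J 0 = 0 := by
    rwa [norm_le_zero_iff] at hJ0norm
  refine Eq.trans ?_ hJ00
  apply circleIntegral.integral_congr hρ.le
  intro z hz
  simp

open Complex intervalIntegral Set Filter in
theorem aux_cif (r : ℝ) (hr : 0 < r) (f : ℂ → ℂ) (R : ℝ) (hR : 0 < R) (hRr : R < r)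
    (hfan : ∀ w : ℂ, w ≠ 0 → ‖w‖ < r → AnalyticAt ℂ f w)
    (hinner : ∀ (w : ℂ), w ≠ 0 → ‖w‖ < r → ∀ ρ : ℝ, 0 < ρ → ρ < ‖w‖ →
      (∮ z in C(0, ρ), f z * (z - w)⁻¹) = 0)
    (w : ℂ) (hw0 : w ≠ 0) (hwR : ‖w‖ < R) :
    (∮ z in C(0, R), (z - w)⁻¹ • f z) = (2 * Real.pi * Complex.I) * f w := by
  have habsw : 0 < ‖w‖ := norm_pos_iff.mpr hw0
  set ρ1 : ℝ := ‖w‖ / 2 with hρ1def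
  have hρ1 : 0 < ρ1 := by positivity
  have hρ1w : ρ1 < ‖w‖ := by rw [hρ1def]; linarith
  have hρ1R : ρ1 ≤ R := le_of_lt (lt_trans hρ1w hwR)
  have hwr : ‖w‖ < r := lt_trans hwR hRr
  -- points of the annulus are nonzero and inside the r-ball
  have hpt : ∀ z : ℂ, ρ1 ≤ ‖z‖ → ‖z‖ ≤ R → (z ≠ 0 ∧ ‖z‖ < r) := by
    intro z h1 h2
    constructor
    · intro h; rw [h] at h1; simp at h1; linarith
    · exact lt_of_le_of_lt h2 hRr
  set h : ℂ → ℂ := dslope f w with hh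
  have hconth : ContinuousOn h (closedBall (0:ℂ) R \ ball (0:ℂ) ρ1) := by
    intro z hz
    have h1 : ρ1 ≤ ‖z‖ := by
      have := hz.2; rw [mem_ball, Complex.dist_eq, sub_zero] at this; linarith [not_lt.1 this]
    have h2 : ‖z‖ ≤ R := by
      have := hz.1; rwa [mem_closedBall, Complex.dist_eq, sub_zero] at this
    obtain ⟨hz0, hzr⟩ := hpt z h1 h2
    by_cases hzw : z = w
    · subst hzw
      exact (continuousAt_dslope_same.2 (hfan z hz0 hzr).differentiableAt).continuousWithinAt
    · exact ((continuousAt_dslope_of_ne hzw).2 (hfan z hz0 hzr).continuousAt).continuousWithinAt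
  have hdifh : ∀ z ∈ (ball (0:ℂ) R \ closedBall (0:ℂ) ρ1) \ {w}, DifferentiableAt ℂ h z := by
    intro z hz
    have hzw : z ≠ w := fun he => hz.2 (by simp [he])
    have h1 : ρ1 ≤ ‖z‖ := by
      have := hz.1.2; rw [mem_closedBall, Complex.dist_eq, sub_zero] at this; linarith [not_le.1 this]
    have h2 : ‖z‖ ≤ R := by
      have := hz.1.1; rw [mem_ball, Complex.dist_eq, sub_zero] at this; linarith
    obtain ⟨hz0, hzr⟩ := hpt z h1 h2
    exact (differentiableAt_dslope_of_ne hzw).2 (hfan z hz0 hzr).differentiableAt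
  have htwo := circleIntegral_eq_of_differentiable_on_annulus_off_countable hρ1 hρ1R
    (Set.countable_singleton w) hconth hdifh
  -- rewrite h on the spheres
  have hsphne : ∀ (s : ℝ), ‖w‖ ≠ s → ∀ z ∈ Metric.sphere (0:ℂ) s, z ≠ w := by
    intro s hs z hz he
    rw [mem_sphere_iff_norm, sub_zero, he] at hz
    exact hs hz
  have hRsph : ∀ z ∈ Metric.sphere (0:ℂ) R, z ≠ w := hsphne R (ne_of_lt hwR)
  have hρ1sph : ∀ z ∈ Metric.sphere (0:ℂ) ρ1, z ≠ w := hsphne ρ1 (ne_of_gt hρ1w)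
  have hexp : ∀ (s : ℝ), 0 ≤ s → (∀ z ∈ Metric.sphere (0:ℂ) s, z ≠ w) →
      (∮ z in C(0, s), h z) = (∮ z in C(0, s), (z - w)⁻¹ • (f z - f w)) := by
    intro s hs hne
    apply circleIntegral.integral_congr hs
    intro z hz
    rw [hh, dslope_of_ne f (hne z hz), slope_def_field]
    simp [div_eq_inv_mul]
  rw [hexp R hR.le hRsph, hexp ρ1 hρ1.le hρ1sph] at htwo
  have hfcont : ∀ (s : ℝ), 0 < s → s ≤ R → ContinuousOn f (Metric.sphere (0:ℂ) s) := by
    intro s hs hsR z hz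
    rw [mem_sphere_iff_norm, sub_zero] at hz
    have hz0 : z ≠ 0 := by intro h; rw [h] at hz; simp at hz; linarith
    have hzr : ‖z‖ < r := by rw [hz]; linarith
    exact (hfan z hz0 hzr).continuousAt.continuousWithinAt
  have hinvcont : ∀ (s : ℝ), (∀ z ∈ Metric.sphere (0:ℂ) s, z ≠ w) →
      ContinuousOn (fun z : ℂ => (z - w)⁻¹) (Metric.sphere (0:ℂ) s) := by
    intro s hne
    exact ContinuousOn.inv₀ (continuousOn_id.sub continuousOn_const)
      (fun z hz => sub_ne_zero.2 (hne z hz))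
  have hsplit : ∀ (s : ℝ), 0 < s → s ≤ R → (∀ z ∈ Metric.sphere (0:ℂ) s, z ≠ w) →
      (∮ z in C(0, s), (z - w)⁻¹ • (f z - f w))
        = (∮ z in C(0, s), (z - w)⁻¹ • f z) - (∮ z in C(0, s), (z - w)⁻¹) * f w := by
    intro s hs hsR hne
    have h1 : CircleIntegrable (fun z : ℂ => (z - w)⁻¹ • f z) 0 s :=
      (((hinvcont s hne).smul (hfcont s hs hsR))).circleIntegrable hs.le
    have h2 : CircleIntegrable (fun z : ℂ => (z - w)⁻¹ • f w) 0 s :=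
      (((hinvcont s hne).smul continuousOn_const)).circleIntegrable hs.le
    have h3 : (∮ z in C(0, s), (z - w)⁻¹ • (f z - f w))
        = ∮ z in C(0, s), ((z - w)⁻¹ • f z - (z - w)⁻¹ • f w) := by
      apply circleIntegral.integral_congr hs.le
      intro z hz
      simp only [smul_eq_mul]
      ring
    rw [h3, circleIntegral.integral_sub h1 h2]
    congr 1
    have := circleIntegral.integral_smul_const (fun z : ℂ => (z - w)⁻¹) (f w) 0 s
    rw [this]
    simp [smul_eq_mul]
  rw [hsplit R hR le_rfl hRsph, hsplit ρ1 hρ1 hρ1R hρ1sph] at htwo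
  -- evaluate the elementary integrals
  have hwball : w ∈ ball (0:ℂ) R := by
    rw [mem_ball, Complex.dist_eq, sub_zero]; exact hwR
  have hRinv : (∮ z in C(0, R), (z - w)⁻¹) = 2 * Real.pi * Complex.I :=
    circleIntegral.integral_sub_inv_of_mem_ball hwball
  have hρ1inv : (∮ z in C(0, ρ1), (z - w)⁻¹) = 0 := by
    apply circleIntegral_eq_zero_of_differentiable_on_off_countable hρ1.le Set.countable_empty
    · intro z hz
      rw [mem_closedBall, Complex.dist_eq, sub_zero] at hz
      have : z ≠ w := by
        intro h; rw [h] at hz; linarith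
      exact (ContinuousAt.continuousWithinAt (by
        exact (continuousAt_id.sub continuousAt_const).inv₀ (sub_ne_zero.2 this)))
    · intro z hz
      rw [Set.diff_empty, mem_ball, Complex.dist_eq, sub_zero] at hz
      have : z ≠ w := by
        intro h; rw [h] at hz; linarith
      exact (differentiableAt_id.sub_const w).inv (sub_ne_zero.2 this)
  have hρ1f : (∮ z in C(0, ρ1), (z - w)⁻¹ • f z) = 0 := by
    refine Eq.trans ?_ (hinner w hw0 hwr ρ1 hρ1 hρ1w)
    apply circleIntegral.integral_congr hρ1.le
    intro z hz
    simp [smul_eq_mul, mul_comm]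
  rw [hRinv, hρ1inv, hρ1f, zero_mul, sub_zero] at htwo
  rw [sub_eq_zero] at htwo
  rw [htwo]

open Complex intervalIntegral Set Filter in
theorem aux_final (r : ℝ) (hr : 0 < r) (F : ℂ → ℂ)
    (hF : AnalyticOnNhd ℂ F {z : ℂ | Real.exp z.re < r})
    (hB : ∀ a b : ℂ, Real.exp a.re < r → Complex.exp a = Complex.exp b → F a = F b)
    (hfan : ∀ w : ℂ, w ≠ 0 → ‖w‖ < r →
      AnalyticAt ℂ (fun w => F (Complex.log w)) w)
    (hcirc : ∀ ρ : ℝ, 0 < ρ → ρ < r → ∀ g : ℂ → ℂ, AnalyticOnNhd ℂ g (Metric.ball 0 r) →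
      (∮ z in C(0, ρ), F (Complex.log z) * g z) = 0)
    (hcif : ∀ (w : ℂ), w ≠ 0 → ‖w‖ < r / 2 →
      (∮ z in C(0, r/2), (z - w)⁻¹ • F (Complex.log z)) = (2 * Real.pi * Complex.I) * F (Complex.log w)) :
    ∃ ftilde : ℂ → ℂ, AnalyticOnNhd ℂ ftilde (Metric.ball 0 r) ∧
      ∀ z : ℂ, Real.exp z.re < r → F z = ftilde (Complex.exp z) := by
  set f : ℂ → ℂ := fun w => F (Complex.log w) with hfdef
  have h2πI : (2 * Real.pi * Complex.I : ℂ) ≠ 0 := by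
    simp [Real.pi_ne_zero, Complex.I_ne_zero]
  set R : ℝ := r / 2 with hRdef
  have hR : 0 < R := by positivity
  set T : ℂ → ℂ := fun w => (2 * Real.pi * Complex.I : ℂ)⁻¹ • ∮ z in C(0, R), (z - w)⁻¹ • f z
    with hTdef
  -- T is analytic on the ball of radius R
  have hfci : CircleIntegrable f 0 R := by
    apply ContinuousOn.circleIntegrable hR.le
    intro z hz
    rw [mem_sphere_iff_norm, sub_zero] at hz
    have hz0 : z ≠ 0 := by intro h; rw [h] at hz; simp at hz; linarith
    have hzr : ‖z‖ < r := by rw [hz, hRdef]; linarith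
    exact (hfan z hz0 hzr).continuousAt.continuousWithinAt
  have hTan : AnalyticAt ℂ T 0 := by
    set Rnn : NNReal := ⟨R, hR.le⟩ with hRnn
    have hc : CircleIntegrable f 0 (Rnn : ℝ) := hfci
    have := hasFPowerSeriesOn_cauchy_integral (f := f) (c := 0) (R := Rnn) hc
      (by exact_mod_cast hR)
    exact this.analyticAt
  set c0 : ℂ := T 0 with hc0
  refine ⟨Function.update f 0 c0, ?_, ?_⟩
  · intro w hw
    rw [mem_ball, Complex.dist_eq, sub_zero] at hw
    by_cases hw0 : w = 0
    · subst hw0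
      apply hTan.congr
      have hmem : Metric.ball (0:ℂ) R ∈ nhds (0:ℂ) := Metric.ball_mem_nhds 0 hR
      filter_upwards [hmem] with v hv
      rw [mem_ball, Complex.dist_eq, sub_zero] at hv
      by_cases hv0 : v = 0
      · subst hv0; rw [Function.update_self]
      · rw [Function.update_of_ne hv0]
        have h5 := hcif v hv0 hv
        simp only [smul_eq_mul] at h5
        show (2 * (Real.pi:ℂ) * Complex.I)⁻¹ * (∮ z in C(0, R), (z - v)⁻¹ * F (Complex.log z))
          = F (Complex.log v)
        rw [h5]
        field_simp
    · have hfa : AnalyticAt ℂ f w := hfan w hw0 hw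
      apply hfa.congr
      have hmem : {v : ℂ | v ≠ 0} ∈ nhds w := (isOpen_ne (x := (0:ℂ))).mem_nhds hw0
      filter_upwards [hmem] with v hv
      rw [Function.update_of_ne hv]
  · intro z hz
    have hexpne : Complex.exp z ≠ 0 := Complex.exp_ne_zero z
    rw [Function.update_of_ne hexpne]
    rw [hfdef]
    apply hB
    · exact hz
    · rw [Complex.exp_log hexpne]

end Aux

/-- The universal covering of the punctured disk `B_r \ {0}` is modeled by the
half-plane `{z : exp (Re z) < r}` with covering map `exp`; a function analytic on the universal
covering is a function `F` analytic on this half-plane.  If all circle integrals of (any branch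
of) `f` against functions `g` analytic on `B_r` vanish, then `f` is single valued and extends
analytically to all of `B_r`. -/
theorem stmt_1 (r : ℝ) (hr : 0 < r) (F : ℂ → ℂ)
    (hF : AnalyticOnNhd ℂ F {z : ℂ | Real.exp z.re < r})
    (hint : ∀ ρ : ℝ, 0 < ρ → ρ < r → ∀ g : ℂ → ℂ, AnalyticOnNhd ℂ g (Metric.ball 0 r) →
      (∫ θ in (0:ℝ)..(2 * Real.pi),
          F ((Real.log ρ : ℂ) + (θ : ℂ) * Complex.I) *
            g ((ρ : ℂ) * Complex.exp ((θ : ℂ) * Complex.I)) *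
            ((ρ : ℂ) * Complex.exp ((θ : ℂ) * Complex.I) * Complex.I)) = 0) :
    ∃ ftilde : ℂ → ℂ, AnalyticOnNhd ℂ ftilde (Metric.ball 0 r) ∧
      ∀ z : ℂ, Real.exp z.re < r → F z = ftilde (Complex.exp z) := by
  have hv := aux_vert r hr F hint
  have hh := aux_horiz r hr F hF hv
  have hper := aux_per r hr F hF hh
  have hB := aux_B r hr F hper
  have hfan := aux_fan r hr F hF hB
  have hcirc := aux_circ r hr F hB hint
  have hmon : ∀ ρ : ℝ, 0 < ρ → ρ < r → ∀ n : ℕ,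
      (∮ z in C(0, ρ), F (Complex.log z) * z ^ n) = 0 := by
    intro ρ h1 h2 n
    exact hcirc ρ h1 h2 (fun z => z ^ n) (fun z _ => (analyticAt_id.pow n))
  have hinner : ∀ (w : ℂ), w ≠ 0 → ‖w‖ < r → ∀ ρ : ℝ, 0 < ρ → ρ < ‖w‖ →
      (∮ z in C(0, ρ), F (Complex.log z) * (z - w)⁻¹) = 0 := by
    intro w hw0 hwr ρ hρ hρw
    have hρr : ρ < r := hρw.trans hwr
    apply aux_inner ρ hρ _ w hρw
    · intro z hz
      rw [Metric.mem_sphere, Complex.dist_eq, sub_zero] at hz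
      have hz0 : z ≠ 0 := by intro h; rw [h] at hz; simp at hz; linarith
      have hzr : ‖z‖ < r := by rw [hz]; linarith
      exact (hfan z hz0 hzr).continuousAt.continuousWithinAt
    · exact fun n => hmon ρ hρ hρr n
  have hcif := aux_cif r hr (fun w => F (Complex.log w)) (r/2) (by positivity) (by linarith)
    hfan hinner
  exact aux_final r hr F hF hB hfan hcirc hcif
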